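/- arXiv:1407.4645 — 3 statements merged into one kernel-verified Lean document; each statement's English description precedes it below -/
import Mathlib

section
/- Under perfect-recall semantics, for any coalition A, state formula ψ and path formula Ψ: ⟨⟨A⟩⟩(ψ ∧ ○Ψ) ≡ ψ ∧ ⟨⟨A⟩⟩○⟨⟨A⟩⟩Ψ. -/
/-- A concurrent game model: available actions (nonempty for each agent at each
state) and a deterministic outcome function. -/
structure CGM (Agt St Act : Type*) where
  act : Agt → St → Set Act
  act_nonempty : ∀ a s, (act a s).Nonempty
  out : St → (Agt → Act) → St

/-- A play `lam` starting at `s` is consistent with the perfect-recall collective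
strategy `σ` of coalition `A` if each transition is effected by some available
action profile in which all members of `A` follow `σ` on the history so far. -/
def ConsistentPlay {Agt St Act : Type*} (M : CGM Agt St Act) (s : St) (A : Set Agt)
    (σ : Agt → List St → Act) (lam : ℕ → St) : Prop :=
  lam 0 = s ∧ ∀ n, ∃ prof : Agt → Act,
    (∀ a, prof a ∈ M.act a (lam n)) ∧
    (∀ a ∈ A, prof a = σ a ((List.range (n + 1)).map lam)) ∧
    M.out (lam n) prof = lam (n + 1)

/-- `M, s ⊨ ⟨⟨A⟩⟩Φ` under perfect-recall semantics: some perfect-recall collective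
strategy of `A`, prescribing only available actions, forces every consistent play
from `s` to satisfy the path property `Φ`. -/
def CoopSat {Agt St Act : Type*} (M : CGM Agt St Act) (s : St) (A : Set Agt)
    (Φ : (ℕ → St) → Prop) : Prop :=
  ∃ σ : Agt → List St → Act,
    (∀ a ∈ A, ∀ (h : List St) (hne : h ≠ []), σ a h ∈ M.act a (h.getLast hne)) ∧
    ∀ lam, ConsistentPlay M s A σ lam → Φ lam

/-- Suffix of a play. -/
def shift {St : Type*} (lam : ℕ → St) (k : ℕ) : ℕ → St := fun n => lam (n + k)

/- ### Auxiliary material -/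

theorem List.getLast_eq_getLastD' {α : Type*} (l : List α) (h : l ≠ []) (d : α) :
    l.getLast h = l.getLastD d := by
  cases l with
  | nil => exact absurd rfl h
  | cons a l => exact (List.getLast_eq_getLastD (a := a) (l := l) h).trans (List.getLastD_cons (a := d) (b := a) (l := l)).symm

/-- A default action profile at the last state of history `l`: members of `A`
follow `σ`, everybody else takes an arbitrary available action. -/
noncomputable def dProf {Agt St Act : Type*} (M : CGM Agt St Act) (A : Set Agt)
    (σ : Agt → List St → Act) (d : St) (l : List St) : Agt → Act :=
  fun a =>
    letI : Decidable (a ∈ A) := Classical.propDecidable _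
    if a ∈ A then σ a l else (M.act_nonempty a (l.getLastD d)).choose

/-- Iterated extension of a history by default profiles. -/
noncomputable def histSeq {Agt St Act : Type*} (M : CGM Agt St Act) (A : Set Agt)
    (σ : Agt → List St → Act) (d : St) (l₀ : List St) : ℕ → List St
  | 0 => l₀
  | n + 1 =>
      histSeq M A σ d l₀ n ++
        [M.out ((histSeq M A σ d l₀ n).getLastD d)
          (dProf M A σ d (histSeq M A σ d l₀ n))]

theorem histSeq_ne {Agt St Act : Type*} (M : CGM Agt St Act) (A : Set Agt)
    (σ : Agt → List St → Act) (d : St) (l₀ : List St) (h : l₀ ≠ []) (n : ℕ) :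
    histSeq M A σ d l₀ n ≠ [] := by
  cases n with
  | zero => exact h
  | succ n => simp [histSeq]

/-- Any available one-step transition consistent with `σ` extends to a full
consistent play. -/
theorem exists_consistent_from {Agt St Act : Type*} (M : CGM Agt St Act) (A : Set Agt)
    (σ : Agt → List St → Act)
    (hav : ∀ a ∈ A, ∀ (h : List St) (hne : h ≠ []), σ a h ∈ M.act a (h.getLast hne))
    (s t : St)
    (hstep : ∃ p : Agt → Act, (∀ a, p a ∈ M.act a s) ∧ (∀ a ∈ A, p a = σ a [s]) ∧
      M.out s p = t) :
    ∃ lam, ConsistentPlay M s A σ lam ∧ lam 1 = t := by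
  obtain ⟨p, hp1, hp2, hp3⟩ := hstep
  classical
  set H : ℕ → List St := histSeq M A σ s [s, t] with hH
  have hHne : ∀ n, H n ≠ [] := histSeq_ne M A σ s [s, t] (by simp)
  set lam : ℕ → St := fun n => Nat.rec s (fun k _ => (H k).getLastD s) n with hlam
  have hlam0 : lam 0 = s := rfl
  have hlamS : ∀ n, lam (n + 1) = (H n).getLastD s := fun n => rfl
  have hlam1 : lam 1 = t := rfl
  -- histories match
  have key : ∀ n, (List.range (n + 2)).map lam = H n := by
    intro n
    induction n with
    | zero =>
        simp [List.range_succ, hlam0, hlam1, hH, histSeq]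
    | succ n ih =>
        rw [List.range_succ, List.map_append, ih]
        have : lam (n + 2) = (H (n + 1)).getLastD s := hlamS (n + 1)
        rw [show (List.map lam [n + 2]) = [lam (n + 2)] from rfl, this]
        show H n ++ [(H (n+1)).getLastD s] = H (n + 1)
        rw [show H (n + 1) = H n ++ [M.out ((H n).getLastD s) (dProf M A σ s (H n))] from rfl]
        rw [List.getLastD_concat]
  refine ⟨lam, ⟨hlam0, ?_⟩, hlam1⟩
  intro n
  cases n with
  | zero =>
      refine ⟨p, ?_, ?_, ?_⟩
      · intro a; rw [hlam0]; exact hp1 a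
      · intro a ha
        have : (List.range 1).map lam = [s] := rfl
        rw [this]; exact hp2 a ha
      · rw [hlam0]; exact hp3.trans hlam1.symm
  | succ n =>
      have hlast : lam (n + 1) = (H n).getLast (hHne n) := by
        rw [hlamS n, List.getLast_eq_getLastD' (H n) (hHne n) s]
      refine ⟨dProf M A σ s (H n), ?_, ?_, ?_⟩
      · intro a
        by_cases ha : a ∈ A
        · have := hav a ha (H n) (hHne n)
          simpa [dProf, ha, hlast] using this
        · have := (M.act_nonempty a ((H n).getLastD s)).choose_spec
          simpa [dProf, ha, hlamS n] using this
      · intro a ha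
        rw [key n]
        simp [dProf, ha]
      · rw [hlamS n, hlamS (n + 1)]
        show M.out ((H n).getLastD s) (dProf M A σ s (H n)) = (H (n+1)).getLastD s
        rw [show H (n + 1) = H n ++ [M.out ((H n).getLastD s) (dProf M A σ s (H n))] from rfl]
        rw [List.getLastD_concat]

/-- The composed strategy for the right-to-left direction: play `σ₀` on the
first step and then the strategy `W t` chosen at the reached state `t`. -/
noncomputable def composedStr {Agt St Act : Type*} (σ₀ : Agt → List St → Act)
    (W : St → Agt → List St → Act) : Agt → List St → Act :=
  fun a l => match l with
  | [] => σ₀ a []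
  | [x] => σ₀ a [x]
  | _ :: t :: r => W t a (t :: r)

/-- under perfect-recall semantics, for any coalition `A`, state
formula `ψ` and path formula `Ψ`:
`⟨⟨A⟩⟩(ψ ∧ ○Ψ) ≡ ψ ∧ ⟨⟨A⟩⟩○⟨⟨A⟩⟩Ψ`
(where `⟨⟨A⟩⟩○χ` holds at `s` iff `A` can enforce the state formula `χ` at every
immediate successor, i.e. at position 1 of every consistent play). -/
theorem coop_next_compose {Agt St Act : Type*} (M : CGM Agt St Act) (s : St)
    (A : Set Agt) (ψ : St → Prop) (Ψ : (ℕ → St) → Prop) :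
    CoopSat M s A (fun lam => ψ (lam 0) ∧ Ψ (shift lam 1)) ↔
      (ψ s ∧ CoopSat M s A (fun lam => CoopSat M (lam 1) A Ψ)) := by
  classical
  constructor
  · rintro ⟨σ, hav, hforce⟩
    have hψ : ψ s := by
      -- there exists a consistent play from s
      have hstep : ∃ p : Agt → Act, (∀ a, p a ∈ M.act a s) ∧ (∀ a ∈ A, p a = σ a [s]) ∧
          M.out s p = M.out s (dProf M A σ s [s]) := by
        classical
        refine ⟨dProf M A σ s [s], ?_, ?_, rfl⟩
        · intro a
          by_cases ha : a ∈ A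
          · have := hav a ha [s] (by simp)
            simpa [dProf, ha] using this
          · have := (M.act_nonempty a (List.getLastD [s] s)).choose_spec
            simpa [dProf, ha] using this
        · intro a ha; simp [dProf, ha]
      obtain ⟨lam, hcons, -⟩ := exists_consistent_from M A σ hav s _ hstep
      have := (hforce lam hcons).1
      rwa [hcons.1] at this
    refine ⟨hψ, σ, hav, ?_⟩
    intro lam hlam
    -- strategy at lam 1 : remember the prefix s
    refine ⟨fun a h => σ a (s :: h), ?_, ?_⟩
    · intro a ha h hne
      have := hav a ha (s :: h) (by simp)
      rwa [List.getLast_cons hne] at this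
    · intro μ hμ
      set ν : ℕ → St := fun n => Nat.rec s (fun k _ => μ k) n with hν
      have hν0 : ν 0 = s := rfl
      have hνS : ∀ n, ν (n + 1) = μ n := fun n => rfl
      have hνcons : ConsistentPlay M s A σ ν := by
        refine ⟨rfl, ?_⟩
        intro n
        cases n with
        | zero =>
            obtain ⟨p, hp1, hp2, hp3⟩ := hlam.2 0
            refine ⟨p, ?_, ?_, ?_⟩
            · intro a; rw [hν0, ← hlam.1]; exact hp1 a
            · intro a ha
              have h2 := hp2 a ha
              have e1 : (List.range 1).map lam = [lam 0] := rfl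
              have e2 : (List.range 1).map ν = [s] := rfl
              rw [e2]
              rw [e1, hlam.1] at h2
              exact h2
            · rw [hν0, hνS 0, hμ.1, ← hlam.1]; exact hp3
        | succ n =>
            obtain ⟨p, hp1, hp2, hp3⟩ := hμ.2 n
            refine ⟨p, ?_, ?_, ?_⟩
            · intro a; rw [hνS n]; exact hp1 a
            · intro a ha
              have h2 := hp2 a ha
              have hcomp : ν ∘ Nat.succ = μ := funext fun k => rfl
              have hmap : (List.range (n + 2)).map ν = s :: (List.range (n + 1)).map μ := by
                rw [List.range_succ_eq_map, List.map_cons, List.map_map, hcomp]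
                rfl
              rw [hmap]; exact h2
            · rw [hνS n, hνS (n + 1)]; exact hp3
      have := (hforce ν hνcons).2
      have hshift : shift ν 1 = μ := by funext n; rfl
      rwa [hshift] at this
  · rintro ⟨hψ, σ₀, hav₀, hforce₀⟩
    -- choose, for each potentially reached state t, a witnessing strategy
    set W : St → Agt → List St → Act := fun t =>
      if h : CoopSat M t A Ψ then h.choose
      else fun a l => (M.act_nonempty a (l.getLastD t)).choose with hW
    have hWav : ∀ t, ∀ a ∈ A, ∀ (h : List St) (hne : h ≠ []),
        W t a h ∈ M.act a (h.getLast hne) := by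
      intro t a ha h hne
      by_cases hc : CoopSat M t A Ψ
      · rw [hW]; simp only [dif_pos hc]
        exact hc.choose_spec.1 a ha h hne
      · rw [hW]; simp only [dif_neg hc]
        have := (M.act_nonempty a (h.getLastD t)).choose_spec
        rwa [List.getLast_eq_getLastD' h hne t]
    have hWforce : ∀ t, CoopSat M t A Ψ → ∀ μ, ConsistentPlay M t A (W t) μ → Ψ μ := by
      intro t hc μ hμ
      have hWt : W t = hc.choose := by rw [hW]; simp only [dif_pos hc]
      exact hc.choose_spec.2 μ (hWt ▸ hμ)
    refine ⟨composedStr σ₀ W, ?_, ?_⟩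
    · intro a ha l hne
      match l with
      | [] => exact absurd rfl hne
      | [x] =>
          have := hav₀ a ha [x] (by simp)
          exact this
      | x :: t :: r =>
          have := hWav t a ha (t :: r) (by simp)
          have hlast : (x :: t :: r).getLast hne = (t :: r).getLast (by simp) := by
            rw [List.getLast_cons]
          rw [hlast]
          exact this
    · intro lam hlam
      constructor
      · rw [hlam.1]; exact hψ
      · -- first, CoopSat M (lam 1) A Ψ via σ₀
        have hC : CoopSat M (lam 1) A Ψ := by
          obtain ⟨p, hp1, hp2, hp3⟩ := hlam.2 0
          have hmap : (List.range 1).map lam = [s] := by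
            show [lam 0] = [s]
            rw [hlam.1]
          have hstep : ∃ p : Agt → Act, (∀ a, p a ∈ M.act a s) ∧
              (∀ a ∈ A, p a = σ₀ a [s]) ∧ M.out s p = lam 1 := by
            refine ⟨p, ?_, ?_, ?_⟩
            · intro a; rw [← hlam.1]; exact hp1 a
            · intro a ha
              have h2 := hp2 a ha
              rw [hmap] at h2
              exact h2
            · rw [← hlam.1]; exact hp3
          obtain ⟨μ, hμcons, hμ1⟩ := exists_consistent_from M A σ₀ hav₀ s (lam 1) hstep
          have h3 : CoopSat M (μ 1) A Ψ := hforce₀ μ hμcons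
          rwa [hμ1] at h3
        -- then, shift lam 1 is consistent with W (lam 1) from lam 1
        have hshiftcons : ConsistentPlay M (lam 1) A (W (lam 1)) (shift lam 1) := by
          refine ⟨rfl, ?_⟩
          intro n
          obtain ⟨p, hp1, hp2, hp3⟩ := hlam.2 (n + 1)
          refine ⟨p, hp1, ?_, hp3⟩
          intro a ha
          have h2 := hp2 a ha
          have hc1 : lam ∘ Nat.succ = shift lam 1 := funext fun k => rfl
          have hc2 : shift lam 1 ∘ Nat.succ = (fun k => shift lam 1 (k + 1)) :=
            funext fun k => rfl
          have hmap : (List.range (n + 2)).map lam =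
              lam 0 :: lam 1 :: (List.range n).map (fun k => shift lam 1 (k + 1)) := by
            rw [List.range_succ_eq_map, List.map_cons, List.map_map, hc1,
              List.range_succ_eq_map, List.map_cons, List.map_map, hc2]
            rfl
          have hmap2 : (List.range (n + 1)).map (shift lam 1) =
              lam 1 :: (List.range n).map (fun k => shift lam 1 (k + 1)) := by
            rw [List.range_succ_eq_map, List.map_cons, List.map_map, hc2]
            rfl
          rw [hmap] at h2
          rw [hmap2]
          exact h2
        exact hWforce (lam 1) hC (shift lam 1) hshiftcons
end

section
/- The formula ⟨⟨1⟩⟩◇(p ∧ ⟨⟨1⟩⟩◇q) → ⟨⟨1⟩⟩(◇p ∧ ◇q) is valid under perfect-recall strategy semantics of ATL+ but is not valid under positional (memoryless) strategy semantics; in particular, in the 4-state 2-agent CGM of Figure 1 the antecedent holds at S₀ under positional semantics while the consequent fails at S₀ under positional semantics. -/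
/-- A play consistent with a positional (memoryless) collective strategy. -/
def PosConsistentPlay {Agt St Act : Type*} (M : CGM Agt St Act) (s : St)
    (A : Set Agt) (σ : Agt → St → Act) (lam : ℕ → St) : Prop :=
  lam 0 = s ∧ ∀ n, ∃ prof : Agt → Act,
    (∀ a, prof a ∈ M.act a (lam n)) ∧
    (∀ a ∈ A, prof a = σ a (lam n)) ∧
    M.out (lam n) prof = lam (n + 1)

/-- `M, s ⊨ ⟨⟨A⟩⟩Φ` under positional (memoryless) strategy semantics. -/
def PosSat {Agt St Act : Type*} (M : CGM Agt St Act) (s : St) (A : Set Agt)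
    (Φ : (ℕ → St) → Prop) : Prop :=
  ∃ σ : Agt → St → Act,
    (∀ a ∈ A, ∀ t, σ a t ∈ M.act a t) ∧
    ∀ lam, PosConsistentPlay M s A σ lam → Φ lam

/-- The concurrent game model of Figure 1: states `S₀,S₁,S₂,S₃`, agents `1,2`
(indices `0,1`), actions `a,b` (indices `0,1`); from `S₀`: `(a,a) ↦ S₁`,
`(a,b) ↦ S₂`, `(b,·) ↦ S₃`; `S₁ →(a,a) S₀`; `S₂ →(a,a) S₃`; `S₃` loops. -/
def figM : CGM (Fin 2) (Fin 4) (Fin 2) where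
  act := fun _ s => if s = 0 then Set.univ else {0}
  act_nonempty := by
    intro a s
    by_cases h : s = (0 : Fin 4) <;> simp [h]
  out := fun s prof =>
    if s = 0 then (if prof 0 = 0 then (if prof 1 = 0 then 1 else 2) else 3)
    else if s = 1 then 0 else 3

/-- In `figM`, `p` holds exactly at `S₁, S₂` and `q` exactly at `S₃`. -/
def pProp (s : Fin 4) : Prop := s = 1 ∨ s = 2
def qProp (s : Fin 4) : Prop := s = 3

section Aux

variable {St Act : Type}

lemma lastDrop {α : Type*} (l : List α) (i : ℕ) (hne : l.drop i ≠ []) (hne2 : l ≠ []) :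
    (l.drop i).getLast hne = l.getLast hne2 := by
  have hi : i < l.length := by
    by_contra h
    exact hne (List.drop_eq_nil_of_le (by omega))
  rw [List.getLast_eq_getElem, List.getLast_eq_getElem, List.getElem_drop]
  have hlen : (l.drop i).length = l.length - i := List.length_drop ..
  have : i + ((l.drop i).length - 1) = l.length - 1 := by omega
  simp only [this]

lemma histGet (lam : ℕ → St) (n i : ℕ) (hi : i < ((List.range (n+1)).map lam).length) :
    ((List.range (n+1)).map lam).get ⟨i, hi⟩ = lam i := by
  simp

lemma histDrop (lam : ℕ → St) (m n : ℕ) :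
    ((List.range (m + n + 1)).map lam).drop m
      = (List.range (n + 1)).map (fun k => lam (m + k)) := by
  apply List.ext_getElem
  · simp; omega
  · intro i h1 h2
    rw [List.getElem_drop]
    simp

open Classical in
/-- The combined strategy: if the history contains a `Good` state, switch to the
inner strategy chosen at the first such state (applied to the suffix history);
otherwise follow `σ0`. -/
noncomputable def comb (Good : St → Prop) (σ0 : List St → Act)
    (inn : St → List St → Act) (h : List St) : Act :=
  if H : ∃ i, ∃ hi : i < h.length, Good (h.get ⟨i, hi⟩) then
    inn (h.get ⟨Nat.find H, (Nat.find_spec H).choose⟩) (h.drop (Nat.find H))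
  else σ0 h

open Classical

lemma comb_mem (Good : St → Prop) (σ0 : List St → Act) (inn : St → List St → Act)
    (Av : St → Set Act)
    (h1 : ∀ (h : List St) (hne : h ≠ []), σ0 h ∈ Av (h.getLast hne))
    (h2 : ∀ t, Good t → ∀ (h : List St) (hne : h ≠ []), inn t h ∈ Av (h.getLast hne))
    (h : List St) (hne : h ≠ []) : comb Good σ0 inn h ∈ Av (h.getLast hne) := by
  unfold comb
  split
  · rename_i H
    have hlt : Nat.find H < h.length := (Nat.find_spec H).choose
    have hgood : Good (h.get ⟨Nat.find H, (Nat.find_spec H).choose⟩) :=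
      (Nat.find_spec H).choose_spec
    have hne' : h.drop (Nat.find H) ≠ [] := by
      intro hnil
      have : (h.drop (Nat.find H)).length = h.length - Nat.find H := List.length_drop
      rw [hnil] at this
      simp at this
      omega
    have h6 := h2 _ hgood (h.drop (Nat.find H)) hne'
    rwa [lastDrop h (Nat.find H) hne' hne] at h6
  · exact h1 h hne

lemma comb_eq_base (Good : St → Prop) (σ0 : List St → Act) (inn : St → List St → Act)
    (lam : ℕ → St) (n : ℕ) (hno : ∀ m ≤ n, ¬ Good (lam m)) :
    comb Good σ0 inn ((List.range (n+1)).map lam) = σ0 ((List.range (n+1)).map lam) := by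
  unfold comb
  rw [dif_neg]
  rintro ⟨i, hi, hg⟩
  rw [histGet] at hg
  have : i < n + 1 := by simpa using hi
  exact hno i (by omega) hg

lemma comb_eq_inner (Good : St → Prop) (σ0 : List St → Act) (inn : St → List St → Act)
    (lam : ℕ → St) (i₀ n : ℕ) (hgood : Good (lam i₀)) (hmin : ∀ m < i₀, ¬ Good (lam m)) :
    comb Good σ0 inn ((List.range (i₀ + n + 1)).map lam)
      = inn (lam i₀) ((List.range (n+1)).map (fun k => lam (i₀ + k))) := by
  unfold comb
  have H : ∃ i, ∃ hi : i < ((List.range (i₀ + n + 1)).map lam).length,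
      Good (((List.range (i₀ + n + 1)).map lam).get ⟨i, hi⟩) := by
    refine ⟨i₀, by simp, ?_⟩
    rw [histGet]; exact hgood
  rw [dif_pos H]
  have hfind : Nat.find H = i₀ := by
    have h1 : Nat.find H ≤ i₀ :=
      Nat.find_le ⟨by simp, by rw [histGet]; exact hgood⟩
    have hg2 : Good (lam (Nat.find H)) := by
      have := (Nat.find_spec H).choose_spec
      rwa [histGet] at this
    have h3 : ¬ Nat.find H < i₀ := fun hl => hmin _ hl hg2
    omega
  simp only [hfind]
  simp only [List.get_eq_getElem, List.getElem_map, List.getElem_range]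
  rw [histDrop lam i₀ n]

end Aux

/-- the formula `⟨⟨1⟩⟩◇(p ∧ ⟨⟨1⟩⟩◇q) → ⟨⟨1⟩⟩(◇p ∧ ◇q)` is valid under
perfect-recall semantics (over all 2-agent CGMs), but under positional semantics
the antecedent holds at `S₀` of the model of Figure 1 while the consequent fails
there. -/
theorem perfect_recall_vs_positional :
    (∀ (St Act : Type) (M : CGM (Fin 2) St Act) (s : St) (p q : St → Prop),
      CoopSat M s {0}
        (fun lam => ∃ i, p (lam i) ∧
          CoopSat M (lam i) {0} (fun mu => ∃ j, q (mu j))) →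
      CoopSat M s {0} (fun lam => (∃ i, p (lam i)) ∧ (∃ j, q (lam j)))) ∧
    PosSat figM 0 {0}
      (fun lam => ∃ i, pProp (lam i) ∧
        PosSat figM (lam i) {0} (fun mu => ∃ j, qProp (mu j))) ∧
    ¬ PosSat figM 0 {0}
      (fun lam => (∃ i, pProp (lam i)) ∧ (∃ j, qProp (lam j))) := by
  classical
  refine ⟨?_, ?_, ?_⟩
  · -- Part 1: validity under perfect recall
    intro St Act M s p q ⟨σ, hσav, hσ⟩
    set Q : (ℕ → St) → Prop := fun mu => ∃ j, q (mu j) with hQ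
    set Good : St → Prop := fun t => p t ∧ CoopSat M t {0} Q with hG
    -- choose inner strategies
    have inner_ex : ∀ t : St, ∃ τ : Fin 2 → List St → Act,
        CoopSat M t {0} Q →
          ((∀ a ∈ ({0} : Set (Fin 2)), ∀ (h : List St) (hne : h ≠ []),
              τ a h ∈ M.act a (h.getLast hne)) ∧
           ∀ mu, ConsistentPlay M t {0} τ mu → Q mu) := by
      intro t
      by_cases hc : CoopSat M t {0} Q
      · exact ⟨hc.choose, fun _ => hc.choose_spec⟩
      · exact ⟨fun a _ => (M.act_nonempty a t).choose, fun h => absurd h hc⟩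
    choose inn hinn using inner_ex
    refine ⟨fun _ => comb Good (σ 0) (fun t h => inn t 0 h), ?_, ?_⟩
    · -- availability
      rintro a rfl
      intro h hne
      exact comb_mem Good (σ 0) (fun t h => inn t 0 h) (M.act 0)
        (hσav 0 rfl) (fun t hg h' hne' => (hinn t hg.2).1 0 rfl h' hne') h hne
    · -- forcing
      rintro lam ⟨h0, hstep⟩
      by_cases hex : ∃ n, Good (lam n)
      · set i₀ := Nat.find hex with hi₀
        have hgood₀ : Good (lam i₀) := Nat.find_spec hex
        have hmin : ∀ m < i₀, ¬ Good (lam m) := fun m hm => Nat.find_min hex hm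
        constructor
        · exact ⟨i₀, hgood₀.1⟩
        · -- suffix play consistent with inner strategy
          set mu : ℕ → St := fun k => lam (i₀ + k) with hmu
          have hcons : ConsistentPlay M (lam i₀) {0} (inn (lam i₀)) mu := by
            refine ⟨rfl, ?_⟩
            intro n
            obtain ⟨prof, hav, hfoll, hout⟩ := hstep (i₀ + n)
            refine ⟨prof, hav, ?_, hout⟩
            rintro a rfl
            have h5 : prof 0 = comb Good (σ 0) (fun t h => inn t 0 h)
                ((List.range (i₀ + n + 1)).map lam) := hfoll 0 rfl
            rw [comb_eq_inner Good (σ 0) (fun t h => inn t 0 h) lam i₀ n hgood₀ hmin] at h5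
            exact h5
          obtain ⟨j, hj⟩ := (hinn (lam i₀) hgood₀.2).2 mu hcons
          exact ⟨i₀ + j, hj⟩
      · -- no Good state: lam is consistent with σ, contradicting hσ
        push_neg at hex
        exfalso
        have hcons : ConsistentPlay M s {0} σ lam := by
          refine ⟨h0, ?_⟩
          intro n
          obtain ⟨prof, hav, hfoll, hout⟩ := hstep n
          refine ⟨prof, hav, ?_, hout⟩
          rintro a rfl
          have h5 : prof 0 = comb Good (σ 0) (fun t h => inn t 0 h)
              ((List.range (n + 1)).map lam) := hfoll 0 rfl
          rw [comb_eq_base Good (σ 0) (fun t h => inn t 0 h) lam n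
            (fun m _ => hex m)] at h5
          exact h5
        obtain ⟨i, hp, hcs⟩ := hσ lam hcons
        exact hex i ⟨hp, hcs⟩
  · -- Part 2: antecedent holds positionally at S₀
    have hq1 : PosSat figM 1 {0} (fun mu => ∃ j, qProp (mu j)) := by
      refine ⟨fun _ t => if t = 0 then 1 else 0, ?_, ?_⟩
      · rintro a - t
        by_cases ht : t = (0 : Fin 4) <;> simp [figM, ht]
      · rintro lam ⟨h0, hstep⟩
        obtain ⟨prof, hav, hfoll, hout⟩ := hstep 0
        have h1 : lam 1 = 0 := by
          rw [← hout, h0]; simp [figM]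
        obtain ⟨prof2, hav2, hfoll2, hout2⟩ := hstep 1
        have hp0 : prof2 0 = 1 := by
          have := hfoll2 0 rfl
          rw [h1] at this
          simpa using this
        have h2 : lam 2 = 3 := by
          rw [← hout2, h1]
          simp [figM, hp0]
        exact ⟨2, by rw [h2]; rfl⟩
    have hq2 : PosSat figM 2 {0} (fun mu => ∃ j, qProp (mu j)) := by
      refine ⟨fun _ _ => 0, ?_, ?_⟩
      · rintro a - t
        by_cases ht : t = (0 : Fin 4) <;> simp [figM, ht]
      · rintro lam ⟨h0, hstep⟩
        obtain ⟨prof, hav, hfoll, hout⟩ := hstep 0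
        have h1 : lam 1 = 3 := by
          rw [← hout, h0]; simp [figM]
        exact ⟨1, by rw [h1]; rfl⟩
    refine ⟨fun _ _ => 0, ?_, ?_⟩
    · rintro a - t
      by_cases ht : t = (0 : Fin 4) <;> simp [figM, ht]
    · rintro lam ⟨h0, hstep⟩
      obtain ⟨prof, hav, hfoll, hout⟩ := hstep 0
      have hp0 : prof 0 = 0 := hfoll 0 rfl
      have h1 : lam 1 = 1 ∨ lam 1 = 2 := by
        rw [← hout, h0]
        by_cases hp1 : prof 1 = 0 <;> simp [figM, hp0, hp1]
      refine ⟨1, ?_, ?_⟩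
      · exact h1.imp (fun h => h) (fun h => h)
      · rcases h1 with h | h <;> rw [h]
        · exact hq1
        · exact hq2
  · -- Part 3: consequent fails positionally at S₀
    rintro ⟨σ, hav, hforce⟩
    by_cases hc : σ 0 0 = 0
    · -- opponent alternates S₀ S₁ S₀ S₁ ...: never q
      set lam : ℕ → Fin 4 := fun n => if n % 2 = 0 then 0 else 1 with hlam
      have hcons : PosConsistentPlay figM 0 {0} σ lam := by
        refine ⟨by simp [hlam], ?_⟩
        intro n
        rcases Nat.even_or_odd n with he | ho
        · have hn : n % 2 = 0 := Nat.even_iff.mp he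
          have hn1 : (n + 1) % 2 = 1 := by omega
          refine ⟨fun _ => 0, ?_, ?_, ?_⟩
          · intro a; simp [hlam, hn, figM]
          · rintro a rfl; simp [hlam, hn, hc]
          · simp [hlam, hn, hn1, figM]
        · have hn : n % 2 = 1 := Nat.odd_iff.mp ho
          have hn1 : (n + 1) % 2 = 0 := by omega
          have hs1 : σ 0 1 = 0 := by
            have := hav 0 rfl 1
            simpa [figM] using this
          refine ⟨fun _ => 0, ?_, ?_, ?_⟩
          · intro a; simp [hlam, hn, figM]
          · rintro a rfl; simp [hlam, hn, hs1]
          · simp [hlam, hn, hn1, figM]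
      obtain ⟨-, j, hj⟩ := hforce lam hcons
      have hl : ∀ m, lam m = 0 ∨ lam m = 1 := by
        intro m
        by_cases h : m % 2 = 0 <;> simp [hlam, h]
      unfold qProp at hj
      rcases hl j with h | h <;> rw [h] at hj <;> exact absurd hj (by decide)
    · -- agent 1 plays b at S₀: goes to S₃ forever, never p
      have hc1 : σ 0 0 = 1 := by omega
      set lam : ℕ → Fin 4 := fun n => if n = 0 then 0 else 3 with hlam
      have hcons : PosConsistentPlay figM 0 {0} σ lam := by
        refine ⟨by simp [hlam], ?_⟩
        intro n
        rcases Nat.eq_zero_or_pos n with rfl | hn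
        · refine ⟨fun _ => 1, ?_, ?_, ?_⟩
          · intro a; simp [hlam, figM]
          · rintro a rfl; simp [hlam, hc1]
          · simp [hlam, figM]
        · have hs3 : σ 0 3 = 0 := by
            have := hav 0 rfl 3
            simpa [figM] using this
          refine ⟨fun _ => 0, ?_, ?_, ?_⟩
          · intro a; simp [hlam, Nat.pos_iff_ne_zero.mp hn, figM]
          · rintro a rfl; simp [hlam, Nat.pos_iff_ne_zero.mp hn, hs3]
          · simp [hlam, Nat.pos_iff_ne_zero.mp hn, figM]
      obtain ⟨⟨i, hi⟩, -⟩ := hforce lam hcons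
      have hl : ∀ m, lam m = 0 ∨ lam m = 3 := by
        intro m
        by_cases h : m = 0 <;> simp [hlam, h]
      unfold pProp at hi
      rcases hl i with h | h <;> rw [h] at hi <;>
        rcases hi with h' | h' <;> exact absurd h' (by decide)
end

section
/- Semantic merging lemma: let Θ = {⟨⟨A₁⟩⟩○φ₁, …, ⟨⟨A_m⟩⟩○φ_m, ⟦A'⟧○ψ} with A_i ∩ A_j = ∅ for i ≠ j and A_i ⊆ A' for all i, and suppose M, s ⊨ Θ with witnesses: A_i-actions σ_{A_i} at s enforcing φ_i, and an A'-co-action σᶜ_{A'} at s enforcing ψ. Then there exists a state s' reachable from s by an action profile extending every σ_{A_i} and consistent with σᶜ_{A'}, such that M, s' ⊨ {φ₁,…,φ_m, ψ}. -/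
/-- semantic merging lemma: let
`Θ = {⟨⟨A₁⟩⟩○φ₁, …, ⟨⟨A_m⟩⟩○φ_m, ⟦A'⟧○ψ}` with the `A i` pairwise disjoint and all
contained in `A'`, and suppose `M, s ⊨ Θ` with witnessing `A i`-actions `σ i` and
an `A'`-co-action `σc` (which depends only on the `A'`-part of a profile). Then
some available action profile extending every `σ i` and consistent with `σc`
leads from `s` to a state `s'` satisfying all the `φ i` and `ψ`. -/
theorem merge_actions {Agt St Act : Type*} (M : CGM Agt St Act) (s : St)
    {ι : Type*} (A : ι → Set Agt) (A' : Set Agt)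
    (hdisj : ∀ i j, i ≠ j → Disjoint (A i) (A j))
    (hsub : ∀ i, A i ⊆ A')
    (φ : ι → St → Prop) (ψ : St → Prop)
    (σ : ι → Agt → Act)
    (hσ : ∀ i, ∀ a ∈ A i, σ i a ∈ M.act a s)
    (henf : ∀ i, ∀ prof : Agt → Act, (∀ a, prof a ∈ M.act a s) →
      (∀ a ∈ A i, prof a = σ i a) → φ i (M.out s prof))
    (σc : (Agt → Act) → (Agt → Act))
    (hσc_avail : ∀ prof, ∀ a ∉ A', σc prof a ∈ M.act a s)
    (hσc_dep : ∀ prof prof', (∀ a ∈ A', prof a = prof' a) → σc prof = σc prof')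
    (hcoenf : ∀ prof : Agt → Act, (∀ a, prof a ∈ M.act a s) →
      (∀ a ∉ A', prof a = σc prof a) → ψ (M.out s prof)) :
    ∃ prof : Agt → Act,
      (∀ a, prof a ∈ M.act a s) ∧
      (∀ i, ∀ a ∈ A i, prof a = σ i a) ∧
      (∀ a ∉ A', prof a = σc prof a) ∧
      (∀ i, φ i (M.out s prof)) ∧ ψ (M.out s prof) := by

  classical
  -- base profile: on A i use σ i, otherwise some available action
  let p0 : Agt → Act := fun a =>
    if h : ∃ i, a ∈ A i then σ h.choose a else (M.act_nonempty a s).choose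
  have hp0_avail : ∀ a, p0 a ∈ M.act a s := by
    intro a
    by_cases h : ∃ i, a ∈ A i
    · simp only [p0, dif_pos h]
      exact hσ h.choose a h.choose_spec
    · simp only [p0, dif_neg h]
      exact (M.act_nonempty a s).choose_spec
  have hp0_ext : ∀ i, ∀ a ∈ A i, p0 a = σ i a := by
    intro i a ha
    have h : ∃ i, a ∈ A i := ⟨i, ha⟩
    simp only [p0, dif_pos h]
    have : h.choose = i := by
      by_contra hne
      exact (hdisj _ _ hne).ne_of_mem h.choose_spec ha rfl
    rw [this]
  let prof : Agt → Act := fun a => if a ∈ A' then p0 a else σc p0 a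
  have hagree : ∀ a ∈ A', prof a = p0 a := fun a ha => if_pos ha
  have hσc_eq : σc prof = σc p0 := hσc_dep prof p0 hagree
  have h1 : ∀ a, prof a ∈ M.act a s := by
    intro a
    by_cases ha : a ∈ A'
    · rw [hagree a ha]; exact hp0_avail a
    · show (if a ∈ A' then p0 a else σc p0 a) ∈ M.act a s
      rw [if_neg ha]; exact hσc_avail p0 a ha
  have h2 : ∀ i, ∀ a ∈ A i, prof a = σ i a := by
    intro i a ha
    rw [hagree a (hsub i ha)]; exact hp0_ext i a ha
  have h3 : ∀ a ∉ A', prof a = σc prof a := by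
    intro a ha
    rw [hσc_eq]
    exact if_neg ha
  exact ⟨prof, h1, h2, h3, fun i => henf i prof h1 (h2 i), hcoenf prof h1 h3⟩
end
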